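/- arXiv:0801.0350 — 3 statements merged into one kernel-verified Lean document; each statement's English description precedes it below -/
import Mathlib

section
/- A set Z ⊆ ℕ is constructively immune if and only if Z is infinite and its complement ℕ \ Z is constructively Σ⁰₁-dense. -/
/-- A standard acceptable enumeration of the r.e. subsets of ℕ:
`W i` is the domain of the `i`-th partial recursive function. -/
def W (i : ℕ) : Set ℕ :=
  {x | ((Denumerable.ofNat Nat.Partrec.Code i).eval x).Dom}

/-- `Z` is constructively immune: `Z` is infinite and some partial recursive `φ`
picks, from each index `i` of an infinite r.e. set, an element of `W i \ Z`. -/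
def ConstructivelyImmune (Z : Set ℕ) : Prop :=
  Z.Infinite ∧ ∃ φ : ℕ →. ℕ, Partrec φ ∧
    ∀ i, (W i).Infinite → ∃ y ∈ φ i, y ∈ W i ∧ y ∉ Z

/-- `D` is constructively Σ⁰₁-dense: a total recursive `l` produces, from each index
`i` of an infinite r.e. set, an index of an infinite r.e. subset of `D ∩ W i`. -/
def ConstructivelySigma01Dense (D : Set ℕ) : Prop :=
  ∃ l : ℕ → ℕ, Computable l ∧
    ∀ i, (W i).Infinite → (W (l i)).Infinite ∧ W (l i) ⊆ D ∩ W i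

open Nat.Partrec (Code)
open Nat.Partrec.Code

-- membership in W as eval
lemma mem_W_iff {i x : ℕ} : x ∈ W i ↔ ∃ y, y ∈ eval (Denumerable.ofNat Code i) x :=
  ⟨fun h => ⟨_, h, rfl⟩, fun ⟨_, h⟩ => h.fst⟩

-- the "find an element of the domain" partial function
lemma search_partrec {l : ℕ → ℕ} (hl : Computable l) :
    Partrec fun i => Nat.rfindOpt fun n =>
      (evaln n.unpair.2 (Denumerable.ofNat Code (l i)) n.unpair.1).map fun _ => n.unpair.1 := by
  apply Partrec.rfindOpt
  apply Computable.option_map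
  · exact primrec_evaln.to_comp.comp
      (((Primrec.snd.comp (Primrec.unpair.comp Primrec.snd)).to_comp.pair
        ((Computable.ofNat Code).comp (hl.comp Computable.fst))).pair
        (Primrec.fst.comp (Primrec.unpair.comp Primrec.snd)).to_comp)
  · exact (Primrec.fst.comp (Primrec.unpair.comp (Primrec.snd.comp Primrec.fst))).to_comp.to₂

lemma dense_to_immune {Z : Set ℕ} {l : ℕ → ℕ} (hl : Computable l)
    (hls : ∀ i, (W i).Infinite → (W (l i)).Infinite ∧ W (l i) ⊆ Zᶜ ∩ W i) :
    ∃ φ : ℕ →. ℕ, Partrec φ ∧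
      ∀ i, (W i).Infinite → ∃ y ∈ φ i, y ∈ W i ∧ y ∉ Z := by
  refine ⟨_, search_partrec hl, fun i hi => ?_⟩
  obtain ⟨hinf, hsub⟩ := hls i hi
  obtain ⟨x, hx⟩ := hinf.nonempty
  obtain ⟨v, hv⟩ := mem_W_iff.1 hx
  obtain ⟨k, hk⟩ := evaln_complete.1 hv
  have hdom : (Nat.rfindOpt fun n =>
      (evaln n.unpair.2 (Denumerable.ofNat Code (l i)) n.unpair.1).map fun _ => n.unpair.1).Dom := by
    refine Nat.rfindOpt_dom.2 ⟨Nat.pair x k, x, ?_⟩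
    simp only [Nat.unpair_pair, Option.mem_def, Option.map_eq_some_iff]
    exact ⟨v, by simpa using hk, trivial⟩
  set y := Part.get _ hdom with hy
  have hmem : y ∈ Nat.rfindOpt fun n =>
      (evaln n.unpair.2 (Denumerable.ofNat Code (l i)) n.unpair.1).map fun _ => n.unpair.1 :=
    ⟨hdom, rfl⟩
  obtain ⟨n, hn⟩ := Nat.rfindOpt_spec hmem
  simp only [Option.mem_def, Option.map_eq_some_iff] at hn
  obtain ⟨w, hw, hw2⟩ := hn
  have hyW : y ∈ W (l i) := hw2 ▸ mem_W_iff.2 ⟨w, evaln_sound hw⟩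
  have := hsub hyW
  exact ⟨y, hmem, this.2, this.1⟩

lemma step_exists {φ : ℕ →. ℕ} (hφ : Partrec φ) :
    ∃ F : ℕ → ℕ, Computable F ∧ ∀ j x, x ∈ W (F j) ↔ ∃ v ∈ φ j, v < x ∧ x ∈ W j := by
  classical
  have hg : Partrec fun p : ℕ => (φ p.unpair.1).bind fun v =>
      (Part.ofOption (if v < p.unpair.2 then some 0 else none)).bind fun _ =>
        eval (Denumerable.ofNat Code p.unpair.1) p.unpair.2 := by
    refine Partrec.bind (hφ.comp (Primrec.fst.comp Primrec.unpair).to_comp) ?_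
    refine Partrec.bind (Computable.ofOption ?_) ?_
    · have : Primrec fun a : ℕ × ℕ =>
          if a.2 < a.1.unpair.2 then (some 0 : Option ℕ) else none :=
        Primrec.ite (PrimrecRel.comp Primrec.nat_lt Primrec.snd
          (Primrec.snd.comp (Primrec.unpair.comp Primrec.fst)))
          (Primrec.const (some 0)) (Primrec.const none)
      exact this.to_comp
    · exact ((eval_part.comp
          ((Computable.ofNat Code).comp
            (Primrec.fst.comp (Primrec.unpair.comp Primrec.fst)).to_comp)
          (Primrec.snd.comp (Primrec.unpair.comp Primrec.fst)).to_comp).comp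
          Computable.fst).to₂
  obtain ⟨cg, hcg⟩ := exists_code.1 (Partrec.nat_iff.1 hg)
  refine ⟨fun j => Encodable.encode (curry cg j),
    (Primrec.encode.comp (primrec₂_curry.comp (Primrec.const cg) Primrec.id)).to_comp, fun j x => ?_⟩
  have hW : ∀ y, y ∈ eval (Denumerable.ofNat Code (Encodable.encode (curry cg j))) x ↔
      y ∈ ((φ j).bind fun v => (Part.ofOption (if v < x then some 0 else none)).bind fun _ =>
        eval (Denumerable.ofNat Code j) x) := by
    intro y
    rw [Denumerable.ofNat_encode, eval_curry, hcg]
    simp [Nat.unpair_pair]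
  rw [mem_W_iff]
  constructor
  · rintro ⟨y, hy⟩
    rw [hW] at hy
    simp only [Part.mem_bind_iff, Part.mem_ofOption] at hy
    obtain ⟨v, hv, z, hz, hy⟩ := hy
    split_ifs at hz with h
    · exact ⟨v, hv, h, mem_W_iff.2 ⟨y, hy⟩⟩
    · simp at hz
  · rintro ⟨v, hv, hlt, hx⟩
    obtain ⟨y, hy⟩ := mem_W_iff.1 hx
    refine ⟨y, (hW y).2 ?_⟩
    simp only [Part.mem_bind_iff, Part.mem_ofOption]
    exact ⟨v, hv, 0, by simp [hlt], hy⟩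

lemma seq_computable {F : ℕ → ℕ} (hF : Computable F) :
    Computable₂ fun i k => (Nat.rec i (fun _ IH => F IH) k : ℕ) :=
  (Computable.nat_rec Computable.snd Computable.fst
    ((hF.comp (Computable.snd.comp Computable.snd)).to₂ :
      Computable₂ fun (_ : ℕ × ℕ) (q : ℕ × ℕ) => F q.2)).to₂

lemma range_index {φ : ℕ →. ℕ} (hφ : Partrec φ) {seq : ℕ → ℕ → ℕ}
    (hseq : Computable₂ seq) :
    ∃ l : ℕ → ℕ, Computable l ∧ ∀ i y, y ∈ W (l i) ↔ ∃ k, y ∈ φ (seq i k) := by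
  classical
  obtain ⟨cφ, hcφ⟩ := exists_code.1 (Partrec.nat_iff.1 hφ)
  have hh : Partrec fun p : ℕ => Nat.rfindOpt fun n =>
      (evaln n.unpair.2 cφ (seq p.unpair.1 n.unpair.1)).bind fun v =>
        if v = p.unpair.2 then some 0 else none := by
    apply Partrec.rfindOpt
    apply Computable.option_bind
    · exact primrec_evaln.to_comp.comp
        (((Primrec.snd.comp (Primrec.unpair.comp Primrec.snd)).to_comp.pair
          (Computable.const cφ)).pair
          (hseq.comp
            (Primrec.fst.comp (Primrec.unpair.comp Primrec.fst)).to_comp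
            (Primrec.fst.comp (Primrec.unpair.comp Primrec.snd)).to_comp))
    · have : Primrec fun q : (ℕ × ℕ) × ℕ =>
          if q.2 = q.1.1.unpair.2 then (some 0 : Option ℕ) else none :=
        Primrec.ite (PrimrecRel.comp Primrec.eq Primrec.snd
          (Primrec.snd.comp (Primrec.unpair.comp (Primrec.fst.comp Primrec.fst))))
          (Primrec.const (some 0)) (Primrec.const none)
      exact this.to_comp.to₂
  obtain ⟨ch, hch⟩ := exists_code.1 (Partrec.nat_iff.1 hh)
  refine ⟨fun i => Encodable.encode (curry ch i),
    (Primrec.encode.comp (primrec₂_curry.comp (Primrec.const ch) Primrec.id)).to_comp, fun i y => ?_⟩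
  have hE : eval (Denumerable.ofNat Code (Encodable.encode (curry ch i))) y
      = Nat.rfindOpt fun n =>
        (evaln n.unpair.2 cφ (seq i n.unpair.1)).bind fun v =>
          if v = y then some 0 else none := by
    rw [Denumerable.ofNat_encode, eval_curry, hch]
    simp [Nat.unpair_pair]
  have : y ∈ W (Encodable.encode (curry ch i)) ↔
      (eval (Denumerable.ofNat Code (Encodable.encode (curry ch i))) y).Dom := Iff.rfl
  rw [this, hE, Nat.rfindOpt_dom]
  constructor
  · rintro ⟨n, a, ha⟩
    simp only [Option.mem_def, Option.bind_eq_some_iff] at ha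
    obtain ⟨v, hv, ha⟩ := ha
    rcases eq_or_ne v y with h | h
    · subst h
      exact ⟨n.unpair.1, by rw [← hcφ]; exact evaln_sound hv⟩
    · simp [h] at ha
  · rintro ⟨k, hk⟩
    rw [← hcφ] at hk
    obtain ⟨s, hs⟩ := evaln_complete.1 hk
    refine ⟨Nat.pair k s, 0, ?_⟩
    simp only [Nat.unpair_pair, Option.mem_def, Option.bind_eq_some_iff]
    exact ⟨y, hs, by simp⟩

def seqF (F : ℕ → ℕ) (i k : ℕ) : ℕ := Nat.rec i (fun _ IH => F IH) k

lemma seqF_computable {F : ℕ → ℕ} (hF : Computable F) : Computable₂ (seqF F) :=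
  seq_computable hF

lemma immune_to_dense {Z : Set ℕ} {φ : ℕ →. ℕ} (hφ : Partrec φ)
    (Hφ : ∀ i, (W i).Infinite → ∃ y ∈ φ i, y ∈ W i ∧ y ∉ Z) :
    ConstructivelySigma01Dense Zᶜ := by
  obtain ⟨F, hF, hFspec⟩ := step_exists hφ
  obtain ⟨l, hl, hlspec⟩ := range_index hφ (seqF_computable hF)
  refine ⟨l, hl, fun i hi => ?_⟩
  have key : ∀ k, (W (seqF F i k)).Infinite ∧ W (seqF F i k) ⊆ W i := by
    intro k
    induction k with
    | zero => exact ⟨hi, subset_rfl⟩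
    | succ k ih =>
      obtain ⟨hinf, hsub⟩ := ih
      obtain ⟨v, hv, hvW, hvZ⟩ := Hφ _ hinf
      have hEq : W (seqF F i (k+1)) = W (seqF F i k) \ {x | x ≤ v} := by
        ext x
        rw [show seqF F i (k+1) = F (seqF F i k) from rfl, hFspec]
        constructor
        · rintro ⟨w, hw, hlt, hx⟩
          cases Part.mem_unique hw hv
          exact ⟨hx, by simpa using hlt⟩
        · rintro ⟨hx, hle⟩
          exact ⟨v, hv, by simpa using hle, hx⟩
      exact ⟨hEq ▸ hinf.diff (Set.finite_le_nat v),
        hEq ▸ (Set.diff_subset.trans hsub)⟩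
  choose v hv hp using fun k => Hφ (seqF F i k) (key k).1
  have hmono : StrictMono v := by
    apply strictMono_nat_of_lt_succ
    intro k
    have h1 : v (k+1) ∈ W (seqF F i (k+1)) := (hp (k+1)).1
    rw [show seqF F i (k+1) = F (seqF F i k) from rfl, hFspec] at h1
    obtain ⟨w, hw, hlt, _⟩ := h1
    cases Part.mem_unique hw (hv k)
    exact hlt
  have hWl : W (l i) = Set.range v := by
    ext y
    rw [hlspec]
    constructor
    · rintro ⟨k, hk⟩
      exact ⟨k, Part.mem_unique (hv k) hk⟩
    · rintro ⟨k, rfl⟩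
      exact ⟨k, hv k⟩
  constructor
  · rw [hWl]
    exact Set.infinite_range_of_injective hmono.injective
  · rw [hWl]
    rintro y ⟨k, rfl⟩
    exact ⟨(hp k).2, (key k).2 (hp k).1⟩

theorem constructivelyImmune_iff (Z : Set ℕ) :
    ConstructivelyImmune Z ↔ Z.Infinite ∧ ConstructivelySigma01Dense Zᶜ := by
  constructor
  · rintro ⟨hZ, φ, hφ, Hφ⟩
    exact ⟨hZ, immune_to_dense hφ Hφ⟩
  · rintro ⟨hZ, l, hl, hls⟩
    exact ⟨hZ, dense_to_immune hl hls⟩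
end

section
/- Let C, D be families of subsets of ℕ, and F a family of total functions ℕ → ℕ containing the identity. If e ≪[B,C]F f and f ≪[C,D]G g (where G contains the identity), then e ≪[B,D]G g. Here f ≪[C,D]F g means: for every total φ ∈ F tending to +∞, the set {x : f(x) < φ(g(x))} is (C,D)-dense. -/
def CDDense (S T : Set (Set ℕ)) (Z : Set ℕ) : Prop :=
  ∀ X ∈ S, X.Infinite → ∃ Y ∈ T, Y.Infinite ∧ Y ⊆ Z ∩ X

def TendsInfty (f : ℕ → ℕ) : Prop := Filter.Tendsto f Filter.atTop Filter.atTop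

/-- `f ≪[C,D]F g`: for every total `φ ∈ F` tending to `+∞`,
`{x : f x < φ (g x)}` is `(C,D)`-dense. -/
def Often (C D : Set (Set ℕ)) (F : Set (ℕ → ℕ)) (f g : ℕ → ℕ) : Prop :=
  ∀ φ ∈ F, TendsInfty φ → CDDense C D {x | f x < φ (g x)}

theorem often_trans (B C D : Set (Set ℕ)) (F G : Set (ℕ → ℕ)) (e f g : ℕ → ℕ)
    (hF : id ∈ F) (hG : id ∈ G)
    (h1 : Often B C F e f) (h2 : Often C D G f g) :
    Often B D G e g := by
  intro φ hφ hφt X hX hXinf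
  obtain ⟨Y, hYC, hYinf, hY⟩ := h1 id hF Filter.tendsto_id X hX hXinf
  obtain ⟨Z, hZD, hZinf, hZ⟩ := h2 φ hφ hφt Y hYC hYinf
  refine ⟨Z, hZD, hZinf, fun x hx => ?_⟩
  obtain ⟨hx1, hx2⟩ := hZ hx
  obtain ⟨hx3, hx4⟩ := hY hx2
  exact ⟨show e x < φ (g x) from lt_trans (show e x < f x from hx3) (show f x < φ (g x) from hx1), hx4⟩
end

section
/- Let F be a class of total monotone increasing functions ℕ → ℕ closed under input and output translation (φ ∈ F, c ⟹ z ↦ max(0, φ(max(0,z−c)) − c) ∈ F, still tending to +∞). Define f ⋘↑ g by: f ≤ct g and for every φ ∈ F tending to +∞ the set {x : f(x) < φ(g(x))} is (C,D)-dense. Then e ≤ct f, f ⋘↑ g, and g ≤ct h together imply e ⋘↑ h. -/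
def LeCt (f g : ℕ → ℕ) : Prop := ∃ c, ∀ x, f x ≤ g x + c

/-- `f ⋘↑ g` for the class `F` of monotone functions. -/
def Lll (C D : Set (Set ℕ)) (F : Set (ℕ → ℕ)) (f g : ℕ → ℕ) : Prop :=
  LeCt f g ∧ Often C D F f g

theorem leCt_lll_leCt (C D : Set (Set ℕ)) (F : Set (ℕ → ℕ))
    (hmono : ∀ φ ∈ F, Monotone φ)
    (hclosed : ∀ φ ∈ F, ∀ c : ℕ, (fun z => φ (z - c) - c) ∈ F ∧
      (TendsInfty φ → TendsInfty fun z => φ (z - c) - c))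
    (e f g h : ℕ → ℕ) (h1 : LeCt e f) (h2 : Lll C D F f g) (h3 : LeCt g h) :
    Lll C D F e h := by
  obtain ⟨c1, hc1⟩ := h1
  obtain ⟨⟨c2, hc2⟩, hoft⟩ := h2
  obtain ⟨c3, hc3⟩ := h3
  constructor
  · exact ⟨c3 + c2 + c1, fun x => by
      have := hc1 x; have := hc2 x; have := hc3 x; omega⟩
  · intro φ hφ hφinf
    set c := max c1 c3 with hc
    obtain ⟨hmem, hinf⟩ := hclosed φ hφ c
    have key := hoft _ hmem (hinf hφinf)
    intro X hX hXinf
    obtain ⟨Y, hY, hYinf, hYsub⟩ := key X hX hXinf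
    refine ⟨Y, hY, hYinf, fun x hx => ?_⟩
    obtain ⟨hx1, hx2⟩ := hYsub hx
    refine ⟨?_, hx2⟩
    simp only [Set.mem_setOf_eq] at hx1 ⊢
    have hfx : f x + c < φ (g x - c) := by omega
    have hgh : g x - c ≤ h x := by have := hc3 x; omega
    have := hmono φ hφ hgh
    have := hc1 x
    omega
end
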